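/- Let Ω ⊂ ℝ^d be a bounded open set and P ⊂ Ω finite with c ∈ (0,1) fixed. For x ∈ closure(Ω), suppose there exists ρ ∈ (0, r) with sup_{y ∈ Ω ∩ B^∞(x, ρ)} dist(y, P) < c ρ, and define r_P(x) as the infimum of all such ρ. Then r_P(x) > 0 and the function r_P : closure(Ω) → (0, ∞) is upper semi-continuous. -/

import Mathlib

open Metric Set

/-- The open `ℓ^∞`-cube of radius `ρ` centered at `x`. -/
def cubeInfty {d : ℕ} (x : EuclideanSpace ℝ (Fin d)) (ρ : ℝ) :
    Set (EuclideanSpace ℝ (Fin d)) :=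
  {z | ∀ i, |z i - x i| < ρ}

lemma abs_coord_le_norm {d : ℕ} (v : EuclideanSpace ℝ (Fin d)) (i : Fin d) :
    |v i| ≤ ‖v‖ := by
  have h1 : |v i| = Real.sqrt (‖v i‖ ^ 2) := by
    rw [Real.sqrt_sq_eq_abs, Real.norm_eq_abs, abs_abs]
  rw [EuclideanSpace.norm_eq, h1]
  exact Real.sqrt_le_sqrt <|
    Finset.single_le_sum (f := fun j => ‖v j‖ ^ 2) (fun j _ => sq_nonneg _) (Finset.mem_univ i)

lemma abs_sub_coord_le_dist {d : ℕ} (y x : EuclideanSpace ℝ (Fin d)) (i : Fin d) :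
    |y i - x i| ≤ dist y x := by
  rw [dist_eq_norm]
  have := abs_coord_le_norm (y - x) i
  simpa using this

/-- The radius function `r_P` of good cubes is positive and upper semi-continuous on the
closure of `Ω`. -/
theorem rP_pos_and_upperSemicontinuous {d : ℕ} (hd : 0 < d)
    (Ω : Set (EuclideanSpace ℝ (Fin d))) (hΩb : Bornology.IsBounded Ω) (hΩo : IsOpen Ω)
    (P : Finset (EuclideanSpace ℝ (Fin d))) (hPne : P.Nonempty)
    (hPΩ : (↑P : Set (EuclideanSpace ℝ (Fin d))) ⊆ Ω)
    (c : ℝ) (hc : c ∈ Set.Ioo (0 : ℝ) 1) (r : ℝ) (hr : 0 < r)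
    (rP : EuclideanSpace ℝ (Fin d) → ℝ)
    (hrP : ∀ x, rP x = sInf {ρ : ℝ | ρ ∈ Set.Ioo 0 r ∧
      (⨆ y ∈ Ω ∩ cubeInfty x ρ,
        Metric.infDist y (↑P : Set (EuclideanSpace ℝ (Fin d)))) < c * ρ})
    (hne : ∀ x ∈ closure Ω, ∃ ρ ∈ Set.Ioo (0 : ℝ) r,
      (⨆ y ∈ Ω ∩ cubeInfty x ρ,
        Metric.infDist y (↑P : Set (EuclideanSpace ℝ (Fin d)))) < c * ρ) :
    (∀ x ∈ closure Ω, 0 < rP x) ∧ UpperSemicontinuousOn rP (closure Ω) := by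
  classical
  obtain ⟨hc0, hc1⟩ := hc
  obtain ⟨p₀, hp₀⟩ := hPne
  have hp₀' : p₀ ∈ (↑P : Set (EuclideanSpace ℝ (Fin d))) := by exact_mod_cast hp₀
  have hPdne : (↑P : Set (EuclideanSpace ℝ (Fin d))).Nonempty := ⟨p₀, hp₀'⟩
  -- a uniform bound on `infDist · P` over `Ω`
  obtain ⟨R, hR⟩ := hΩb.subset_closedBall p₀
  set C : ℝ := max R 0 with hCdef
  have hC0 : (0 : ℝ) ≤ C := le_max_right _ _
  have hfC : ∀ y ∈ Ω, Metric.infDist y (↑P : Set (EuclideanSpace ℝ (Fin d))) ≤ C := by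
    intro y hy
    exact (Metric.infDist_le_dist_of_mem hp₀').trans
      ((mem_closedBall.mp (hR hy)).trans (le_max_left _ _))
  -- boundedness of the ranges appearing in the suprema
  have hbdd : ∀ (x : EuclideanSpace ℝ (Fin d)) (ρ : ℝ), BddAbove (Set.range fun y =>
      ⨆ _ : y ∈ Ω ∩ cubeInfty x ρ,
        Metric.infDist y (↑P : Set (EuclideanSpace ℝ (Fin d)))) := by
    intro x ρ
    refine ⟨C, ?_⟩
    rintro _ ⟨y, rfl⟩
    exact Real.iSup_le (fun hy => hfC y hy.1) hC0
  -- each term is at most the supremum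
  have hle_g : ∀ (x : EuclideanSpace ℝ (Fin d)) (ρ : ℝ) (y : EuclideanSpace ℝ (Fin d)),
      y ∈ Ω ∩ cubeInfty x ρ →
      Metric.infDist y (↑P : Set (EuclideanSpace ℝ (Fin d))) ≤
        ⨆ z ∈ Ω ∩ cubeInfty x ρ,
          Metric.infDist z (↑P : Set (EuclideanSpace ℝ (Fin d))) := by
    intro x ρ y hy
    have h1 : Metric.infDist y (↑P : Set (EuclideanSpace ℝ (Fin d))) ≤
        ⨆ _ : y ∈ Ω ∩ cubeInfty x ρ,
          Metric.infDist y (↑P : Set (EuclideanSpace ℝ (Fin d))) := by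
      refine le_ciSup (f := fun _ : y ∈ Ω ∩ cubeInfty x ρ =>
        Metric.infDist y (↑P : Set (EuclideanSpace ℝ (Fin d)))) ?_ hy
      exact ⟨Metric.infDist y (↑P : Set (EuclideanSpace ℝ (Fin d))), by
        rintro _ ⟨h, rfl⟩; exact le_rfl⟩
    exact h1.trans (le_ciSup (hbdd x ρ) y)
  have hSlb : ∀ (x : EuclideanSpace ℝ (Fin d)), BddBelow {ρ : ℝ | ρ ∈ Set.Ioo 0 r ∧
      (⨆ y ∈ Ω ∩ cubeInfty x ρ,
        Metric.infDist y (↑P : Set (EuclideanSpace ℝ (Fin d)))) < c * ρ} :=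
    fun x => ⟨0, fun ρ hρ => hρ.1.1.le⟩
  -- a positive lower bound for the defining set, for every `x ∈ closure Ω`
  have key : ∀ x ∈ closure Ω, ∃ b > 0, ∀ ρ, ρ ∈ Set.Ioo (0 : ℝ) r →
      (⨆ y ∈ Ω ∩ cubeInfty x ρ,
        Metric.infDist y (↑P : Set (EuclideanSpace ℝ (Fin d)))) < c * ρ → b ≤ ρ := by
    intro x hx
    by_cases hxP : x ∈ (↑P : Set (EuclideanSpace ℝ (Fin d)))
    · -- `x` is one of the points of `P`
      have hxΩ : x ∈ Ω := hPΩ hxP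
      obtain ⟨t, ht0, htΩ⟩ := Metric.isOpen_iff.mp hΩo x hxΩ
      set δ : ℝ := if h : (P.erase x).Nonempty then (P.erase x).inf' h (fun p => dist x p)
        else 1 with hδdef
      have hδ0 : 0 < δ := by
        rw [hδdef]
        split_ifs with h
        · rw [Finset.lt_inf'_iff]
          intro p hp
          exact dist_pos.mpr (Ne.symm (Finset.ne_of_mem_erase hp))
        · exact one_pos
      have hδle : ∀ p ∈ P, p ≠ x → δ ≤ dist x p := by
        intro p hp hpx
        have hpe : p ∈ P.erase x := Finset.mem_erase.mpr ⟨hpx, hp⟩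
        rw [hδdef]
        rw [dif_pos ⟨p, hpe⟩]
        exact Finset.inf'_le _ hpe
      refine ⟨min t (δ / 2), lt_min ht0 (half_pos hδ0), ?_⟩
      intro ρ hρIoo hρsup
      by_contra hlt
      push_neg at hlt
      have hρt : ρ < t := hlt.trans_le (min_le_left _ _)
      have hρδ : ρ < δ / 2 := hlt.trans_le (min_le_right _ _)
      have hρ0 : 0 < ρ := hρIoo.1
      set s : ℝ := (c + 1) / 2 * ρ with hsdef
      have hs0 : 0 < s := by positivity
      have hsρ : s < ρ := by nlinarith
      have hcs : c * ρ < s := by nlinarith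
      set i0 : Fin d := ⟨0, hd⟩
      set y : EuclideanSpace ℝ (Fin d) := x + s • EuclideanSpace.single i0 (1 : ℝ) with hydef
      have hyx : dist y x = s := by
        rw [dist_eq_norm, hydef]
        simp only [add_sub_cancel_left, norm_smul, EuclideanSpace.norm_single]
        simp [abs_of_pos hs0]
      have hyΩ : y ∈ Ω := htΩ (mem_ball.mpr (by rw [hyx]; exact hsρ.trans hρt))
      have hycube : y ∈ cubeInfty x ρ := by
        intro i
        exact (abs_sub_coord_le_dist y x i).trans_lt (by rw [hyx]; exact hsρ)
      have hyP : s ≤ Metric.infDist y (↑P : Set (EuclideanSpace ℝ (Fin d))) := by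
        obtain ⟨p, hp, hpe⟩ :=
          (P.finite_toSet.isCompact).exists_infDist_eq_dist hPdne y
        rw [hpe]
        by_cases hpx : p = x
        · rw [hpx]; rw [hyx]
        · have h1 : δ ≤ dist x p := hδle p (by exact_mod_cast hp) hpx
          have h2 : dist x p ≤ dist x y + dist y p := dist_triangle _ _ _
          have h3 : dist x y = s := by rw [dist_comm]; exact hyx
          have : δ - s ≤ dist y p := by linarith
          have : ρ ≤ dist y p := by linarith [hsρ, hρδ]
          linarith [hsρ]
      have := (hyP.trans (hle_g x ρ y ⟨hyΩ, hycube⟩)).trans_lt hρsup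
      linarith
    · -- `x` is not in `P`
      have hm : 0 < Metric.infDist x (↑P : Set (EuclideanSpace ℝ (Fin d))) :=
        (P.finite_toSet.isClosed.notMem_iff_infDist_pos hPdne).mp hxP
      set m := Metric.infDist x (↑P : Set (EuclideanSpace ℝ (Fin d))) with hmdef
      refine ⟨m, hm, ?_⟩
      intro ρ hρIoo hρsup
      -- the supremum is at least `m`
      have hgm : m ≤ ⨆ y ∈ Ω ∩ cubeInfty x ρ,
          Metric.infDist y (↑P : Set (EuclideanSpace ℝ (Fin d))) := by
        by_contra hlt
        push_neg at hlt
        set M := ⨆ y ∈ Ω ∩ cubeInfty x ρ,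
          Metric.infDist y (↑P : Set (EuclideanSpace ℝ (Fin d))) with hMdef
        have hε : 0 < min (m - M) ρ := lt_min (by linarith) hρIoo.1
        obtain ⟨y, hyΩ, hyd⟩ := Metric.mem_closure_iff.mp hx _ hε
        have hycube : y ∈ cubeInfty x ρ := by
          intro i
          have := abs_sub_coord_le_dist y x i
          rw [dist_comm] at this
          exact this.trans_lt (hyd.trans_le (min_le_right _ _))
        have h1 : m ≤ Metric.infDist y (↑P : Set (EuclideanSpace ℝ (Fin d))) + dist x y :=
          Metric.infDist_le_infDist_add_dist
        have h2 : Metric.infDist y (↑P : Set (EuclideanSpace ℝ (Fin d))) ≤ M :=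
          hle_g x ρ y ⟨hyΩ, hycube⟩
        have h3 : dist x y < m - M := hyd.trans_le (min_le_left _ _)
        linarith
      have : m < c * ρ := hgm.trans_lt hρsup
      nlinarith [hρIoo.1]
  have hpos : ∀ x ∈ closure Ω, 0 < rP x := by
    intro x hx
    obtain ⟨b, hb0, hb⟩ := key x hx
    obtain ⟨ρ, hρIoo, hρsup⟩ := hne x hx
    rw [hrP]
    have : b ≤ sInf {ρ : ℝ | ρ ∈ Set.Ioo 0 r ∧
        (⨆ y ∈ Ω ∩ cubeInfty x ρ,
          Metric.infDist y (↑P : Set (EuclideanSpace ℝ (Fin d)))) < c * ρ} :=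
      le_csInf ⟨ρ, hρIoo, hρsup⟩ (fun ρ' hρ' => hb ρ' hρ'.1 hρ'.2)
    linarith
  refine ⟨hpos, ?_⟩
  -- upper semicontinuity
  intro x hx t ht
  rw [hrP] at ht
  obtain ⟨ρ, hρS, hρt⟩ := exists_lt_of_csInf_lt
    (by obtain ⟨ρ, h1, h2⟩ := hne x hx; exact ⟨ρ, h1, h2⟩) ht
  obtain ⟨hρIoo, hρsup⟩ := hρS
  have hρ0 : 0 < ρ := hρIoo.1
  set M := ⨆ y ∈ Ω ∩ cubeInfty x ρ,
    Metric.infDist y (↑P : Set (EuclideanSpace ℝ (Fin d))) with hMdef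
  have hM0 : 0 ≤ M :=
    Real.iSup_nonneg fun y => Real.iSup_nonneg fun _ => Metric.infDist_nonneg
  set a : ℝ := max (M / c) (ρ / 2) with hadef
  have ha_lt : a < ρ := max_lt ((div_lt_iff₀ hc0).mpr (by rw [mul_comm]; exact hρsup))
    (half_lt_self hρ0)
  set ρ' : ℝ := (a + ρ) / 2 with hρ'def
  have hρ'a : a < ρ' := by rw [hρ'def]; linarith
  have hρ'ρ : ρ' < ρ := by rw [hρ'def]; linarith
  have hρ'0 : 0 < ρ' := lt_of_le_of_lt (le_trans (by linarith : (0:ℝ) ≤ ρ / 2)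
    (le_max_right _ _)) hρ'a
  have hMc : M < c * ρ' := by
    have h1 : M / c < ρ' := (le_max_left _ _).trans_lt hρ'a
    have := (div_lt_iff₀ hc0).mp h1
    linarith [this, mul_comm ρ' c]
  have hε : 0 < ρ - ρ' := by linarith
  have hball : Metric.ball x (ρ - ρ') ∈ nhdsWithin x (closure Ω) :=
    mem_nhdsWithin_of_mem_nhds (Metric.ball_mem_nhds x hε)
  refine Filter.eventually_of_mem hball ?_
  intro x' hx'
  show rP x' < t
  rw [hrP]
  have hcube : ∀ y ∈ cubeInfty x' ρ', y ∈ cubeInfty x ρ := by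
    intro y hy i
    have h1 : |y i - x' i| < ρ' := hy i
    have h2 : |x' i - x i| ≤ dist x' x := abs_sub_coord_le_dist x' x i
    have h3 : dist x' x < ρ - ρ' := mem_ball.mp hx'
    calc |y i - x i| ≤ |y i - x' i| + |x' i - x i| := by
          have : y i - x i = (y i - x' i) + (x' i - x i) := by ring
          rw [this]; exact abs_add_le _ _
      _ < ρ' + (ρ - ρ') := by linarith
      _ = ρ := by ring
  have hsup' : (⨆ y ∈ Ω ∩ cubeInfty x' ρ',
      Metric.infDist y (↑P : Set (EuclideanSpace ℝ (Fin d)))) ≤ M := by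
    refine Real.iSup_le (fun y => Real.iSup_le (fun hy => ?_) hM0) hM0
    exact hle_g x ρ y ⟨hy.1, hcube y hy.2⟩
  have hmem : ρ' ∈ {σ : ℝ | σ ∈ Set.Ioo 0 r ∧
      (⨆ y ∈ Ω ∩ cubeInfty x' σ,
        Metric.infDist y (↑P : Set (EuclideanSpace ℝ (Fin d)))) < c * σ} :=
    ⟨⟨hρ'0, hρ'ρ.trans hρIoo.2⟩, hsup'.trans_lt hMc⟩
  have : sInf {σ : ℝ | σ ∈ Set.Ioo 0 r ∧
      (⨆ y ∈ Ω ∩ cubeInfty x' σ,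
        Metric.infDist y (↑P : Set (EuclideanSpace ℝ (Fin d)))) < c * σ} ≤ ρ' :=
    csInf_le (hSlb x') hmem
  linarith
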